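/- Let K be an algebraically closed field of characteristic p ≥ 0, let g ≥ 1 and s ≥ 0 be integers, and let μ_1,…,μ_s be integers with each μ_j ≥ 2. Let Γ be the group with presentation ⟨x_1,…,x_g, y_1,…,y_g, γ_1,…,γ_s | (∏_{i=1}^{g}[x_i,y_i])·γ_1⋯γ_s = 1, γ_j^{μ_j} = 1 for 1 ≤ j ≤ s⟩, and let ℓ be the number of indices j with p ∤ μ_j. Then the first group cohomology with trivial coefficients satisfies: dim_K H^1(Γ, K) = 2g + s − 1 − ℓ if ℓ < s, and dim_K H^1(Γ, K) = 2g if ℓ = s. -/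

import Mathlib

open scoped commutatorElement

/-- Relations presenting the orbifold group of a closed genus-`g` surface with `s`
marked points of multiplicities `μ_j`: the surface relation
`(∏ i, [x_i, y_i]) · γ_1 ⋯ γ_s = 1` together with `γ_j ^ μ_j = 1` for all `j`.
The generator `Sum.inl (Sum.inl i)` is `x_i`, `Sum.inl (Sum.inr i)` is `y_i`, and
`Sum.inr j` is `γ_j`. -/
def surfRels (g s : ℕ) (μ : Fin s → ℕ) : Set (FreeGroup ((Fin g ⊕ Fin g) ⊕ Fin s)) :=
  (Set.range fun j : Fin s => FreeGroup.of (Sum.inr j) ^ μ j) ∪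
    {(List.ofFn fun i : Fin g =>
        ⁅FreeGroup.of (Sum.inl (Sum.inl i) : (Fin g ⊕ Fin g) ⊕ Fin s),
          FreeGroup.of (Sum.inl (Sum.inr i) : (Fin g ⊕ Fin g) ⊕ Fin s)⁆).prod *
      (List.ofFn fun j : Fin s => FreeGroup.of (Sum.inr j : (Fin g ⊕ Fin g) ⊕ Fin s)).prod}

/-- The orbifold group
`Γ = ⟨x_1,…,x_g, y_1,…,y_g, γ_1,…,γ_s ∣ (∏ i [x_i,y_i])·γ_1⋯γ_s = 1, γ_j^{μ_j} = 1⟩`. -/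
abbrev SurfOrbGroup (g s : ℕ) (μ : Fin s → ℕ) : Type := PresentedGroup (surfRels g s μ)

section Aux

variable (K : Type) [Field K] (g s : ℕ) (μ : Fin s → ℕ)

open Finset Multiplicative

/-- If a function vanishes off a predicate, its sum equals the sum over the subtype. -/
lemma surf_sum_subtype {s : ℕ} {M : Type*} [AddCommMonoid M] (P : Fin s → Prop) [DecidablePred P]
    (c : Fin s → M) (h : ∀ j, ¬ P j → c j = 0) : ∑ j, c j = ∑ t : {j // P j}, c t.1 := by
  rw [← Finset.sum_subtype (Finset.univ.filter P) (fun x => by simp) c]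
  exact (Finset.sum_filter_of_ne (fun x _ hx => by_contra fun hp => hx (h x hp))).symm

/-- The solution space of the abelianized relations. -/
def surfS : Submodule K (((Fin g ⊕ Fin g) ⊕ Fin s) → K) where
  carrier := {v | (∀ j, (μ j : K) * v (Sum.inr j) = 0) ∧ ∑ j, v (Sum.inr j) = 0}
  add_mem' := by
    rintro a b ⟨ha1, ha2⟩ ⟨hb1, hb2⟩
    refine ⟨fun j => ?_, ?_⟩
    · simp [mul_add, ha1 j, hb1 j]
    · simp [Finset.sum_add_distrib, ha2, hb2]
  zero_mem' := by simp
  smul_mem' := by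
    rintro c v ⟨h1, h2⟩
    refine ⟨fun j => ?_, ?_⟩
    · simp only [Pi.smul_apply, smul_eq_mul, mul_left_comm, h1 j, mul_zero]
    · simp [← Finset.mul_sum, h2]

/-- The sum functional on a finite product of copies of the field. -/
def sumFun (ι : Type) [Fintype ι] : (ι → K) →ₗ[K] K where
  toFun c := ∑ i, c i
  map_add' a b := Finset.sum_add_distrib
  map_smul' r a := by simp [Finset.mul_sum]

lemma finrank_ker_sumFun (ι : Type) [Fintype ι] [Nonempty ι] :
    Module.finrank K (LinearMap.ker (sumFun K ι)) = Fintype.card ι - 1 := by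
  obtain ⟨i₀⟩ := ‹Nonempty ι›
  classical
  have hsur : Function.Surjective (sumFun K ι) := fun x =>
    ⟨Pi.single i₀ x, by simp [sumFun, Finset.sum_pi_single']⟩
  have h := LinearMap.finrank_range_add_finrank_ker (sumFun K ι)
  rw [LinearMap.range_eq_top.2 hsur, finrank_top, Module.finrank_self,
    Module.finrank_pi] at h
  omega

lemma finrank_ker_sumFun_empty (ι : Type) [Fintype ι] [IsEmpty ι] :
    Module.finrank K (LinearMap.ker (sumFun K ι)) = 0 := by
  have : Subsingleton (ι → K) := ⟨fun a b => funext fun i => isEmptyElim i⟩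
  exact Module.finrank_zero_of_subsingleton

variable {K g s μ}

/-- Any monoid hom from the free group to a commutative group sends the surface word to
the "product of images of the `γ_j`". -/
lemma surf_hom_surface (G : FreeGroup ((Fin g ⊕ Fin g) ⊕ Fin s) →* Multiplicative K) :
    G ((List.ofFn fun i : Fin g =>
        ⁅FreeGroup.of (Sum.inl (Sum.inl i) : (Fin g ⊕ Fin g) ⊕ Fin s),
          FreeGroup.of (Sum.inl (Sum.inr i) : (Fin g ⊕ Fin g) ⊕ Fin s)⁆).prod *
      (List.ofFn fun j : Fin s => FreeGroup.of (Sum.inr j : (Fin g ⊕ Fin g) ⊕ Fin s)).prod)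
      = Multiplicative.ofAdd (∑ j, (G (FreeGroup.of (Sum.inr j))).toAdd) := by
  have hc : ∀ x y : Multiplicative K, ⁅x, y⁆ = 1 := fun x y =>
    commutatorElement_eq_one_iff_commute.2 (mul_comm x y)
  rw [map_mul, map_list_prod, map_list_prod, List.map_ofFn, List.map_ofFn,
    List.prod_ofFn, List.prod_ofFn, ofAdd_sum]
  simp [Function.comp_def, map_commutatorElement, hc]

/-- Evaluation of additive characters of the orbifold group on the generators. -/
def surfEv : (Additive (SurfOrbGroup g s μ) →+ K) →ₗ[K] (((Fin g ⊕ Fin g) ⊕ Fin s) → K) where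
  toFun f := fun x => f (Additive.ofMul (PresentedGroup.of x))
  map_add' _ _ := rfl
  map_smul' _ _ := rfl

lemma surfEv_injective : Function.Injective (surfEv (K := K) (g := g) (s := s) (μ := μ)) := by
  intro f₁ f₂ h
  have key : ∀ x : SurfOrbGroup g s μ,
      x ∈ MonoidHom.eqLocus (AddMonoidHom.toMultiplicativeRight f₁) (AddMonoidHom.toMultiplicativeRight f₂) := fun x =>
    PresentedGroup.generated_by _ _ (fun j => congrArg Multiplicative.ofAdd (congrFun h j)) x
  refine AddMonoidHom.ext fun x => ?_
  exact congrArg Multiplicative.toAdd (key x.toMul)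

lemma surfEv_range : LinearMap.range (surfEv (K := K) (g := g) (s := s) (μ := μ)) =
    surfS K g s μ := by
  apply le_antisymm
  · rintro _ ⟨f, rfl⟩
    set G : FreeGroup ((Fin g ⊕ Fin g) ⊕ Fin s) →* Multiplicative K :=
      (AddMonoidHom.toMultiplicativeRight f).comp (PresentedGroup.mk (surfRels g s μ)) with hG
    have hGr : ∀ r ∈ surfRels g s μ, G r = 1 := by
      intro r hr
      have h1 : PresentedGroup.mk (surfRels g s μ) r = 1 :=
        (QuotientGroup.eq_one_iff r).mpr (Subgroup.subset_normalClosure hr)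
      rw [hG, MonoidHom.comp_apply, h1, map_one]
    have hof : ∀ x, (G (FreeGroup.of x)).toAdd = surfEv f x := fun x => rfl
    constructor
    · intro j
      have h1 := hGr _ (Or.inl ⟨j, rfl⟩)
      rw [map_pow] at h1
      have h2 : (μ j) • (G (FreeGroup.of (Sum.inr j))).toAdd = 0 := by
        rw [← toAdd_pow, h1]; rfl
      rw [nsmul_eq_mul, hof] at h2
      exact h2
    · have h1 := hGr _ (Or.inr rfl)
      rw [surf_hom_surface] at h1
      have h2 : (∑ j, (G (FreeGroup.of (Sum.inr j))).toAdd) = 0 := h1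
      simpa [hof] using h2
  · rintro v ⟨h1, h2⟩
    have hF : ∀ r ∈ surfRels g s μ,
        FreeGroup.lift (fun x => Multiplicative.ofAdd (v x)) r = 1 := by
      rintro r (⟨j, rfl⟩ | rfl)
      · rw [map_pow, FreeGroup.lift_apply_of, ← ofAdd_nsmul]
        have h3 : (μ j) • v (Sum.inr j) = 0 := by rw [nsmul_eq_mul]; exact h1 j
        rw [h3]; rfl
      · rw [surf_hom_surface]
        have h3 : ∀ j, ((FreeGroup.lift fun x => Multiplicative.ofAdd (v x))
            (FreeGroup.of (Sum.inr j))).toAdd = v (Sum.inr j) := fun j => by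
          rw [FreeGroup.lift_apply_of]; rfl
        rw [funext h3, h2]; rfl
    refine ⟨MonoidHom.toAdditiveLeft (PresentedGroup.toGroup hF), ?_⟩
    funext x
    show ((PresentedGroup.toGroup hF) (PresentedGroup.of x)).toAdd = v x
    rw [PresentedGroup.toGroup.of]; rfl

lemma surfS_inr_zero {v : ((Fin g ⊕ Fin g) ⊕ Fin s) → K} (hv : v ∈ surfS K g s μ)
    {j : Fin s} (h : ¬ ringChar K ∣ μ j) : v (Sum.inr j) = 0 := by
  have hμ : (μ j : K) ≠ 0 := fun h0 => h ((ringChar.spec K (μ j)).mp h0)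
  exact (mul_eq_zero.mp (hv.1 j)).resolve_left hμ

variable (K g s μ)

/-- The solution space decomposes as a product. -/
noncomputable def surfSEquiv : (surfS K g s μ) ≃ₗ[K]
    ((Fin g ⊕ Fin g) → K) × (LinearMap.ker (sumFun K {j : Fin s // ringChar K ∣ μ j})) where
  toFun v := ⟨fun i => v.1 (Sum.inl i), ⟨fun t => v.1 (Sum.inr t.1), by
    show ∑ t : {j : Fin s // ringChar K ∣ μ j}, v.1 (Sum.inr t.1) = 0
    rw [← surf_sum_subtype _ _ (fun j hj => surfS_inr_zero v.2 hj)]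
    exact v.2.2⟩⟩
  invFun p := ⟨fun x => Sum.elim p.1
      (fun j => if h : ringChar K ∣ μ j then p.2.1 ⟨j, h⟩ else 0) x, by
    constructor
    · intro j
      by_cases h : ringChar K ∣ μ j
      · have h0 : (μ j : K) = 0 := (ringChar.spec K (μ j)).mpr h
        simp [h0]
      · simp [h]
    · show ∑ j, (if h : ringChar K ∣ μ j then p.2.1 ⟨j, h⟩ else 0) = 0
      rw [surf_sum_subtype (fun j => ringChar K ∣ μ j) _ (fun j hj => dif_neg hj)]
      exact (Finset.sum_congr rfl fun t _ => dif_pos t.2).trans p.2.2⟩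
  map_add' a b := by
    refine Prod.ext rfl (Subtype.ext ?_); rfl
  map_smul' c a := by
    refine Prod.ext rfl (Subtype.ext ?_); rfl
  left_inv v := by
    refine Subtype.ext (funext fun x => ?_)
    rcases x with i | j
    · rfl
    · by_cases h : ringChar K ∣ μ j
      · simp [h]
      · simp [h, (surfS_inr_zero v.2 h).symm]
  right_inv p := by
    refine Prod.ext rfl (Subtype.ext (funext fun t => ?_))
    show (if h : ringChar K ∣ μ t.1 then p.2.1 ⟨t.1, h⟩ else 0) = p.2.1 t
    rw [dif_pos t.2]

lemma surf_finrank_H1 : Module.finrank K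
      (groupCohomology.H1 (Rep.trivial K (SurfOrbGroup g s μ) K)) =
    2 * g + Module.finrank K
      (LinearMap.ker (sumFun K {j : Fin s // ringChar K ∣ μ j})) := by
  have e1 : Module.finrank K (groupCohomology.H1 (Rep.trivial K (SurfOrbGroup g s μ) K)) =
      Module.finrank K (Additive (SurfOrbGroup g s μ) →+ K) :=
    (groupCohomology.H1IsoOfIsTrivial (Rep.trivial K (SurfOrbGroup g s μ) K)).toLinearEquiv.finrank_eq
  have e2 : Module.finrank K (Additive (SurfOrbGroup g s μ) →+ K) =
      Module.finrank K (surfS K g s μ) := by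
    have h := (LinearEquiv.ofInjective _
      (surfEv_injective (K := K) (g := g) (s := s) (μ := μ))).finrank_eq
    rwa [surfEv_range] at h
  rw [e1, e2, (surfSEquiv K g s μ).finrank_eq, Module.finrank_prod, Module.finrank_pi,
    Fintype.card_sum, Fintype.card_fin]
  ring_nf

end Aux

/-- let `K` be an algebraically closed field of characteristic `p ≥ 0`,
`g ≥ 1`, `s ≥ 0`, `μ_j ≥ 2`, and `Γ` the compact-surface orbifold group above.
With `ℓ = #{j | p ∤ μ_j}`, the cohomology with trivial coefficients satisfies
`dim_K H¹(Γ, K) = 2g + s - 1 - ℓ` if `ℓ < s`, and `dim_K H¹(Γ, K) = 2g` if `ℓ = s`. -/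
theorem stmt8 (K : Type) [Field K] [IsAlgClosed K] (g s : ℕ) (hg : 1 ≤ g)
    (μ : Fin s → ℕ) (hμ : ∀ j, 2 ≤ μ j) :
    (Nat.card {j : Fin s // ¬ (ringChar K ∣ μ j)} < s →
      Module.finrank K (groupCohomology.H1 (Rep.trivial K (SurfOrbGroup g s μ) K)) =
        2 * g + s - 1 - Nat.card {j : Fin s // ¬ (ringChar K ∣ μ j)}) ∧
    (Nat.card {j : Fin s // ¬ (ringChar K ∣ μ j)} = s →
      Module.finrank K (groupCohomology.H1 (Rep.trivial K (SurfOrbGroup g s μ) K)) =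
        2 * g) := by
  have hcard : Nat.card {j : Fin s // ¬ (ringChar K ∣ μ j)} =
      s - Fintype.card {j : Fin s // ringChar K ∣ μ j} := by
    rw [Nat.card_eq_fintype_card, Fintype.card_subtype_compl, Fintype.card_fin]
  have hle : Fintype.card {j : Fin s // ringChar K ∣ μ j} ≤ s := by
    simpa using Fintype.card_subtype_le (fun j : Fin s => ringChar K ∣ μ j)
  constructor
  · intro hlt
    rw [hcard] at hlt ⊢
    have hpos : 0 < Fintype.card {j : Fin s // ringChar K ∣ μ j} := by omega
    haveI : Nonempty {j : Fin s // ringChar K ∣ μ j} := Fintype.card_pos_iff.mp hpos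
    rw [surf_finrank_H1, finrank_ker_sumFun]
    omega
  · intro heq
    rw [hcard] at heq
    have hzero : Fintype.card {j : Fin s // ringChar K ∣ μ j} = 0 := by omega
    haveI : IsEmpty {j : Fin s // ringChar K ∣ μ j} := Fintype.card_eq_zero_iff.mp hzero
    rw [surf_finrank_H1, finrank_ker_sumFun_empty]
    omega
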